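/- Let p ≥ 1, a ∈ (0,2), and π a probability distribution on {0,1}^p. Define the prior risk R(γ̂) = E_π[Σ_{i=1}^p (a·1(γ_i=0)·1(γ̂_i=1) + (2−a)·1(γ_i=1)·1(γ̂_i=0))]. Then R is a constant function on {0,1}^p if and only if π(γ_i = 1) = a/2 for every i = 1, …, p. -/

import Mathlib

open Finset

/-- Risk equilibrium characterization for generalized Hamming loss: the prior risk is
constant on `{0,1}^p` iff every marginal inclusion probability equals `a/2`. -/
theorem riskEquilibrium_iff_marginal_eq_half_a
    (p : ℕ) (hp : 1 ≤ p)
    (π : (Fin p → Bool) → ℝ)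
    (hπ : ∀ γ, 0 ≤ π γ) (hπ1 : ∑ γ : Fin p → Bool, π γ = 1)
    (a : ℝ) (ha : 0 < a) (ha2 : a < 2)
    (R : (Fin p → Bool) → ℝ)
    (hR : ∀ ghat, R ghat = ∑ γ : Fin p → Bool, π γ * ∑ i : Fin p,
      (a * (if γ i = false then 1 else 0) * (if ghat i = true then 1 else 0)
        + (2 - a) * (if γ i = true then 1 else 0) * (if ghat i = false then 1 else 0))) :
    (∀ ghat ghat' : Fin p → Bool, R ghat = R ghat') ↔
      (∀ i : Fin p, (∑ γ : Fin p → Bool, (if γ i = true then π γ else 0)) = a / 2) := by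
  set q : Fin p → ℝ := fun i => ∑ γ : Fin p → Bool, (if γ i = true then π γ else 0) with hq
  have hqcompl : ∀ i, (∑ γ : Fin p → Bool, (if γ i = false then π γ else 0)) = 1 - q i := by
    intro i
    have h : (∑ γ : Fin p → Bool, (if γ i = false then π γ else 0))
        + (∑ γ : Fin p → Bool, (if γ i = true then π γ else 0)) = 1 := by
      rw [← Finset.sum_add_distrib, ← hπ1]
      apply Finset.sum_congr rfl
      intro γ _
      cases hgi : γ i <;> simp [hgi]
    have : q i = ∑ γ : Fin p → Bool, (if γ i = true then π γ else 0) := rfl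
    linarith [h]
  have hR' : ∀ ghat, R ghat = ∑ i : Fin p,
      (if ghat i = true then a * (1 - q i) else (2 - a) * q i) := by
    intro ghat
    rw [hR ghat]
    rw [Finset.sum_congr rfl (fun γ _ => Finset.mul_sum _ _ _), Finset.sum_comm]
    apply Finset.sum_congr rfl
    intro i _
    cases h : ghat i with
    | false =>
      have key : ∀ γ : Fin p → Bool,
          π γ * (a * (if γ i = false then 1 else 0) * (if false = true then (1:ℝ) else 0)
            + (2 - a) * (if γ i = true then 1 else 0) * (if false = false then 1 else 0))
          = (2 - a) * (if γ i = true then π γ else 0) := by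
        intro γ; cases hg : γ i <;> simp [hg] <;> ring
      rw [Finset.sum_congr rfl (fun γ _ => key γ), ← Finset.mul_sum]
      simp [hq]
    | true =>
      have key : ∀ γ : Fin p → Bool,
          π γ * (a * (if γ i = false then 1 else 0) * (if true = true then (1:ℝ) else 0)
            + (2 - a) * (if γ i = true then 1 else 0) * (if true = false then 1 else 0))
          = a * (if γ i = false then π γ else 0) := by
        intro γ; cases hg : γ i <;> simp [hg] <;> ring
      rw [Finset.sum_congr rfl (fun γ _ => key γ), ← Finset.mul_sum, hqcompl]
      simp
  constructor
  · intro hconst i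
    have hd := hconst (fun j => decide (j = i)) (fun _ => false)
    rw [hR', hR'] at hd
    rw [← Finset.add_sum_erase Finset.univ _ (Finset.mem_univ i),
        ← Finset.add_sum_erase Finset.univ
          (fun j => if (fun _ : Fin p => false) j = true then a * (1 - q j) else (2 - a) * q j)
          (Finset.mem_univ i)] at hd
    have herase : ∑ j ∈ Finset.univ.erase i,
        (if (decide (j = i)) = true then a * (1 - q j) else (2 - a) * q j)
        = ∑ j ∈ Finset.univ.erase i,
        (if (fun _ : Fin p => false) j = true then a * (1 - q j) else (2 - a) * q j) := by
      apply Finset.sum_congr rfl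
      intro j hj
      have hji : j ≠ i := Finset.ne_of_mem_erase hj
      simp [hji]
    rw [herase] at hd
    have h1 : a * (1 - q i) = (2 - a) * q i := by
      have := add_right_cancel hd
      simpa using this
    have : q i = a / 2 := by nlinarith [h1]
    exact this
  · intro hmarg ghat ghat'
    have key : ∀ (g : Fin p → Bool) (i : Fin p),
        (if g i = true then a * (1 - q i) else (2 - a) * q i) = a * (2 - a) / 2 := by
      intro g i
      have : q i = a / 2 := hmarg i
      cases hg : g i <;> rw [this] <;> norm_num <;> ring
    rw [hR', hR']
    rw [Finset.sum_congr rfl (fun i _ => key ghat i),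
        Finset.sum_congr rfl (fun i _ => key ghat' i)]
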